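/- In the unrestricted regular wreath product G = Z Wr Z (the semidirect product of the full direct product ∏_{i∈Z} Z by Z acting by shift), the entire base group ∏_{i∈Z} Z is contained in the commutator subgroup G', and consequently G/G' ≅ Z. -/

import Mathlib

def permAut {X : Type*} (B : Type*) [Group B] (e : Equiv.Perm X) : MulAut (X → B) :=
  MulEquiv.arrowCongr e (MulEquiv.refl B)

def wreathMul {A X : Type*} [Group A] (ρ : A →* Equiv.Perm X) (B : Type*) [Group B] :
    A →* MulAut (X → B) where
  toFun a := permAut B (ρ a)
  map_one' := by
    ext f x
    simp [permAut]
    rfl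
  map_mul' := by
    intro a b
    ext f x
    simp [permAut, MulEquiv.arrowCongr, map_mul]
    rfl

noncomputable def mingen (G : Type*) [Group G] : ℕ :=
  sInf {k | ∃ S : Finset G, S.card = k ∧ Subgroup.closure (S : Set G) = ⊤}

/-- The translation action of `ℤ` on itself. -/
def transRep : Multiplicative ℤ →* Equiv.Perm ℤ where
  toFun a := Equiv.addLeft a.toAdd
  map_one' := by ext x; simp
  map_mul' := by intro a b; ext x; simp [add_assoc]

lemma telescope_aux (F : ℤ → ℤ) (n : ℤ) :
    ((∑ i ∈ Finset.Icc 1 n, F i) - ∑ i ∈ Finset.Icc (n+1) 0, F i)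
      - ((∑ i ∈ Finset.Icc 1 (n-1), F i) - ∑ i ∈ Finset.Icc n 0, F i) = F n := by
  rcases le_or_gt 1 n with h | h
  · rw [Finset.Icc_eq_empty (by omega : ¬ (n+1:ℤ) ≤ 0),
        Finset.Icc_eq_empty (by omega : ¬ (n:ℤ) ≤ 0),
        show Finset.Icc (1:ℤ) n = insert n (Finset.Icc 1 (n-1)) by
          ext x; simp; omega,
        Finset.sum_insert (by simp)]
    simp
  · rw [Finset.Icc_eq_empty (by omega : ¬ (1:ℤ) ≤ n),
        Finset.Icc_eq_empty (by omega : ¬ (1:ℤ) ≤ n-1),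
        show Finset.Icc (n:ℤ) 0 = insert n (Finset.Icc (n+1) 0) by
          ext x; simp; omega,
        Finset.sum_insert (by simp)]
    simp

open scoped commutatorElement

theorem base_le_commutator_unrestricted_wreath_int :
    (∀ f : ℤ → Multiplicative ℤ,
      (SemidirectProduct.inl f :
          (ℤ → Multiplicative ℤ) ⋊[wreathMul transRep (Multiplicative ℤ)] Multiplicative ℤ)
        ∈ commutator ((ℤ → Multiplicative ℤ)
            ⋊[wreathMul transRep (Multiplicative ℤ)] Multiplicative ℤ)) ∧
    Nonempty (Abelianization ((ℤ → Multiplicative ℤ)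
        ⋊[wreathMul transRep (Multiplicative ℤ)] Multiplicative ℤ) ≃* Multiplicative ℤ) := by
  set φ := wreathMul transRep (Multiplicative ℤ)
  have part1 : ∀ f : ℤ → Multiplicative ℤ,
      (SemidirectProduct.inl f : (ℤ → Multiplicative ℤ) ⋊[φ] Multiplicative ℤ)
        ∈ commutator ((ℤ → Multiplicative ℤ) ⋊[φ] Multiplicative ℤ) := by
    intro f
    set t : Multiplicative ℤ := Multiplicative.ofAdd 1 with ht
    set g : ℤ → Multiplicative ℤ := fun n =>
      Multiplicative.ofAdd ((∑ i ∈ Finset.Icc 1 n, (f i).toAdd)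
        - ∑ i ∈ Finset.Icc (n+1) 0, (f i).toAdd) with hg
    have key : (SemidirectProduct.inl f : (ℤ → Multiplicative ℤ) ⋊[φ] Multiplicative ℤ)
        = ⁅(SemidirectProduct.inl g : (ℤ → Multiplicative ℤ) ⋊[φ] Multiplicative ℤ), SemidirectProduct.inr t⁆ := by
      rw [commutatorElement_def]
      have : ((SemidirectProduct.inr t) * (SemidirectProduct.inl g)⁻¹ * (SemidirectProduct.inr t)⁻¹ :
          (ℤ → Multiplicative ℤ) ⋊[φ] Multiplicative ℤ) = SemidirectProduct.inl (φ t g⁻¹) := by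
        rw [← map_inv, ← map_inv, SemidirectProduct.inl_aut]
      rw [mul_assoc, mul_assoc, ← mul_assoc (SemidirectProduct.inr t), this, ← map_mul]
      congr 1
      funext x
      have hφ : (g * φ t g⁻¹) x = g x * (g (-1 + x))⁻¹ := rfl
      rw [hφ, show (-1:ℤ) + x = x - 1 by ring]
      apply Multiplicative.toAdd.injective
      have := telescope_aux (fun i => (f i).toAdd) x
      simp only [hg, toAdd_mul, toAdd_inv, toAdd_ofAdd, show x - 1 + 1 = x by ring]
      linarith
    rw [key]
    exact Subgroup.commutator_mem_commutator (Subgroup.mem_top _) (Subgroup.mem_top _)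
  refine ⟨part1, ?_⟩
  have hsurj : Function.Surjective
      (SemidirectProduct.rightHom : (ℤ → Multiplicative ℤ) ⋊[φ] Multiplicative ℤ →* Multiplicative ℤ) :=
    SemidirectProduct.rightHom_surjective
  have hker : commutator ((ℤ → Multiplicative ℤ) ⋊[φ] Multiplicative ℤ)
      = (SemidirectProduct.rightHom : (ℤ → Multiplicative ℤ) ⋊[φ] Multiplicative ℤ →* Multiplicative ℤ).ker := by
    apply le_antisymm
    · exact Abelianization.commutator_subset_ker _
    · intro x hx
      have hx' : x.right = 1 := hx
      have : x = SemidirectProduct.inl x.left :=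
        SemidirectProduct.ext rfl hx'
      rw [this]
      exact part1 _
  exact ⟨(QuotientGroup.quotientMulEquivOfEq hker).trans
    (QuotientGroup.quotientKerEquivOfSurjective _ hsurj)⟩
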